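/- arXiv:1409.7942 — 3 statements merged into one kernel-verified Lean document; each statement's English description precedes it below -/
import Mathlib

section
/- With R₀ defined as the product [φ/(α₁+μ_E+c_E)]·[α₁/(α₂+μ_A+c_A)]·[α₂/(α₃+μ_{F₁}+c_{F₁})]·[α₃/(μ_{F₂}+c_{F₂})], the coordinates of the nontrivial equilibrium point P_b are all strictly positive if and only if R₀ > 1, given that φ, α₁, α₂, α₃, K and all four denominators are strictly positive. -/
/-- The coordinates of P_b are all strictly positive iff R₀ > 1. -/
theorem nontrivial_equilibrium_pos_iff
    (φ α₁ α₂ α₃ μE μA μF1 μF2 K cE cA cF1 cF2 : ℝ)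
    (hμE : 0 ≤ μE) (hμA : 0 ≤ μA) (hμF1 : 0 ≤ μF1) (hμF2 : 0 ≤ μF2)
    (hcE : 0 ≤ cE) (hcA : 0 ≤ cA) (hcF1 : 0 ≤ cF1) (hcF2 : 0 ≤ cF2)
    (hK : 0 < K)
    (hφ : 0 < φ) (hα₁ : 0 < α₁) (hα₂ : 0 < α₂) (hα₃ : 0 < α₃)
    (hb₁ : 0 < α₁ + μE + cE) (hb₂ : 0 < α₂ + μA + cA)
    (hb₃ : 0 < α₃ + μF1 + cF1) (hb₄ : 0 < μF2 + cF2) :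
    let R₀ := (φ / (α₁ + μE + cE)) * (α₁ / (α₂ + μA + cA)) *
      (α₂ / (α₃ + μF1 + cF1)) * (α₃ / (μF2 + cF2))
    let E := K * (1 - 1 / R₀)
    let A := α₁ * E / (α₂ + μA + cA)
    let F₁ := α₂ * A / (α₃ + μF1 + cF1)
    let F₂ := α₃ * F₁ / (μF2 + cF2)
    (0 < E ∧ 0 < A ∧ 0 < F₁ ∧ 0 < F₂) ↔ 1 < R₀ := by
  intro R₀ E A F₁ F₂
  have hR : 0 < R₀ := by positivity
  have hE : 0 < E ↔ 1 < R₀ := by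
    unfold E
    rw [mul_pos_iff]
    constructor
    · rintro (⟨_, h⟩ | ⟨h, _⟩)
      · rw [sub_pos, div_lt_one hR] at h; exact h
      · linarith
    · intro h
      left
      refine ⟨hK, ?_⟩
      rw [sub_pos, div_lt_one hR]
      exact h
  have hA : 0 < E → 0 < A := fun h => by unfold A; positivity
  have hF1 : 0 < A → 0 < F₁ := fun h => by unfold F₁; positivity
  have hF2 : 0 < F₁ → 0 < F₂ := fun h => by unfold F₂; positivity
  constructor
  · rintro ⟨h, _⟩; exact hE.mp h
  · intro h
    have h1 := hE.mpr h
    have h2 := hA h1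
    have h3 := hF1 h2
    exact ⟨h1, h2, h3, hF2 h3⟩
end

section
/- Under the hypotheses b₁, b₂, b₃, b₄ > 0 and R₀ = φα₁α₂α₃/(b₁b₂b₃b₄) > 1, the trivial equilibrium (0,0,0,0) of the system E' = φ(1 - E/K)F₂ - b₁E, A' = α₁E - b₂A, F₁' = α₂A - b₃F₁, F₂' = α₃F₁ - b₄F₂ is linearly unstable: the Jacobian at (0,0,0,0) has an eigenvalue with strictly positive real part. -/
set_option maxHeartbeats 2000000 in
/-- If R₀ > 1, the trivial equilibrium is linearly unstable: the Jacobian at the origin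
has an eigenvalue with strictly positive real part. -/
theorem trivial_equilibrium_unstable
    (φ α₁ α₂ α₃ b₁ b₂ b₃ b₄ K : ℝ)
    (hφ : 0 < φ) (hα₁ : 0 < α₁) (hα₂ : 0 < α₂) (hα₃ : 0 < α₃)
    (h₁ : 0 < b₁) (h₂ : 0 < b₂) (h₃ : 0 < b₃) (h₄ : 0 < b₄) (hK : 0 < K)
    (hR : 1 < φ * α₁ * α₂ * α₃ / (b₁ * b₂ * b₃ * b₄)) :
    let B : Matrix (Fin 4) (Fin 4) ℂ :=
      (Matrix.of ![![-b₁, 0, 0, φ], ![α₁, -b₂, 0, 0],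
        ![0, α₂, -b₃, 0], ![0, 0, α₃, -b₄]]).map (Complex.ofReal)
    ∃ z : ℂ, z ∈ spectrum ℂ B ∧ 0 < z.re := by
  intro B
  -- the characteristic polynomial as a real function
  set P : ℝ := φ * α₁ * α₂ * α₃ with hP
  have hPpos : 0 < P := by positivity
  have hb : b₁ * b₂ * b₃ * b₄ < P := by
    have hb4 : 0 < b₁ * b₂ * b₃ * b₄ := by positivity
    rw [lt_div_iff₀ hb4, one_mul] at hR
    exact hR
  set f : ℝ → ℝ := fun x => (x + b₁) * (x + b₂) * (x + b₃) * (x + b₄) - P with hf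
  have hf0 : f 0 < 0 := by simp [hf]; nlinarith
  set M : ℝ := P + 1 with hM
  have hfM : 0 < f M := by
    have h1 : (1:ℝ) < M + b₁ := by nlinarith
    have h2 : (1:ℝ) < M + b₂ := by nlinarith
    have h3 : (1:ℝ) < M + b₃ := by nlinarith
    have h4 : (1:ℝ) < M + b₄ := by nlinarith
    have h0 : (0:ℝ) < M + b₁ := by linarith
    have e2 : M + b₁ < (M + b₁) * (M + b₂) := by nlinarith
    have e3 : (M + b₁) * (M + b₂) < (M + b₁) * (M + b₂) * (M + b₃) := by nlinarith
    have e4 : (M + b₁) * (M + b₂) * (M + b₃) <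
        (M + b₁) * (M + b₂) * (M + b₃) * (M + b₄) := by nlinarith
    have hMb : P < M + b₁ := by simp only [hM]; linarith
    simp only [hf]
    linarith
  have hcont : ContinuousOn f (Set.Icc 0 M) := by
    apply Continuous.continuousOn; fun_prop
  have hMpos : (0:ℝ) ≤ M := by nlinarith
  obtain ⟨x, hxmem, hxf⟩ := intermediate_value_Icc hMpos hcont
    (Set.mem_Icc.mpr ⟨le_of_lt hf0, le_of_lt hfM⟩)
  have hxpos : 0 < x := by
    rcases lt_or_eq_of_le hxmem.1 with h | h
    · exact h
    · exfalso; rw [← h] at hxf; linarith [hf0, hxf.symm.le]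
  refine ⟨(x : ℂ), ?_, by simpa using hxpos⟩
  rw [spectrum.mem_iff]
  intro hu
  rw [Matrix.isUnit_iff_isUnit_det] at hu
  have hBC : algebraMap ℂ (Matrix (Fin 4) (Fin 4) ℂ) (x:ℂ) - B =
      !![(x:ℂ)+b₁, 0, 0, -φ; -α₁, (x:ℂ)+b₂, 0, 0;
         0, -α₂, (x:ℂ)+b₃, 0; 0, 0, -α₃, (x:ℂ)+b₄] := by
    ext i j
    fin_cases i <;> fin_cases j <;>
      simp [B, Matrix.algebraMap_eq_diagonal, Matrix.diagonal, sub_eq_add_neg, Matrix.vecHead, Matrix.vecTail]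
  have hdet : (algebraMap ℂ (Matrix (Fin 4) (Fin 4) ℂ) (x:ℂ) - B).det
      = Complex.ofReal (f x) := by
    rw [hBC]
    rw [show ((f x : ℝ) : ℂ) = ((x:ℂ)+b₁)*((x:ℂ)+b₂)*((x:ℂ)+b₃)*((x:ℂ)+b₄)
        - (φ:ℂ)*α₁*α₂*α₃ by simp [hf]; push_cast [hP]; ring]
    simp [Matrix.det_succ_row_zero, Fin.sum_univ_succ, show (Fin.castSucc 2 : Fin 4) = 2 from rfl,
      show (Fin.succAbove (3 : Fin 4) (2 : Fin 3)) = 2 from rfl]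
    ring
  rw [hdet, hxf] at hu
  simp at hu
end

section
/- If all rate parameters are strictly positive and K > 0, then the system E' = φ(1 - E/K)F₂ - b₁E, A' = α₁E - b₂A, F₁' = α₂A - b₃F₁, F₂' = α₃F₁ - b₄F₂ has exactly two equilibrium points when R₀ ≠ 1: the origin and P_b. -/
/-- When R₀ ≠ 1, the system has exactly two equilibrium points: the origin and P_b. -/
theorem exactly_two_equilibria (φ α₁ α₂ α₃ b₁ b₂ b₃ b₄ K : ℝ)
    (hφ : 0 < φ) (hα₁ : 0 < α₁) (hα₂ : 0 < α₂) (hα₃ : 0 < α₃)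
    (h₁ : 0 < b₁) (h₂ : 0 < b₂) (h₃ : 0 < b₃) (h₄ : 0 < b₄) (hK : 0 < K)
    (hR : φ * α₁ * α₂ * α₃ / (b₁ * b₂ * b₃ * b₄) ≠ 1) :
    let R₀ := φ * α₁ * α₂ * α₃ / (b₁ * b₂ * b₃ * b₄)
    let Estar := K * (1 - 1 / R₀)
    let Astar := α₁ * Estar / b₂
    let F₁star := α₂ * Astar / b₃
    let F₂star := α₃ * F₁star / b₄
    ∀ E A F₁ F₂ : ℝ,
      (φ * (1 - E / K) * F₂ - b₁ * E = 0 ∧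
       α₁ * E - b₂ * A = 0 ∧
       α₂ * A - b₃ * F₁ = 0 ∧
       α₃ * F₁ - b₄ * F₂ = 0) ↔
      ((E, A, F₁, F₂) = (0, 0, 0, 0) ∨ (E, A, F₁, F₂) = (Estar, Astar, F₁star, F₂star)) := by
  intro R₀ Estar Astar F₁star F₂star E A F₁ F₂
  have hb₁ := h₁.ne'
  have hb₂ := h₂.ne'
  have hb₃ := h₃.ne'
  have hb₄ := h₄.ne'
  have hKne := hK.ne'
  have hp : 0 < φ * α₁ * α₂ * α₃ := by positivity
  have hq : 0 < b₁ * b₂ * b₃ * b₄ := by positivity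
  have hpq : φ * α₁ * α₂ * α₃ ≠ b₁ * b₂ * b₃ * b₄ := by
    intro h
    exact hR (by rw [h]; field_simp)
  have hEstar : Estar = K * (1 - (b₁ * b₂ * b₃ * b₄) / (φ * α₁ * α₂ * α₃)) := by
    simp only [Estar, R₀, one_div, inv_div]
  constructor
  · rintro ⟨e1, e2, e3, e4⟩
    have hA : A = α₁ * E / b₂ := by field_simp; linarith
    have hF₁ : F₁ = α₂ * A / b₃ := by field_simp; linarith
    have hF₂ : F₂ = α₃ * F₁ / b₄ := by field_simp; linarith
    subst hF₂; subst hF₁; subst hA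
    have key : E * ((φ * α₁ * α₂ * α₃) * (K - E) - (b₁ * b₂ * b₃ * b₄) * K) = 0 := by
      have := e1
      field_simp at this
      nlinarith [this]
    rcases mul_eq_zero.mp key with hE | hE
    · left; subst hE; norm_num
    · right
      have hEe : E = Estar := by
        rw [hEstar]
        have hpne : (φ * α₁ * α₂ * α₃) ≠ 0 := hp.ne'
        field_simp
        nlinarith [hE]
      subst hEe
      simp [Astar, F₁star, F₂star, Estar]
  · rintro (h | h) <;> simp only [Prod.mk.injEq] at h <;>
      obtain ⟨hE, hA, hF₁, hF₂⟩ := h <;> subst hE <;> subst hA <;> subst hF₁ <;> subst hF₂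
    · norm_num
    · refine ⟨?_, by show α₁ * Estar - b₂ * (α₁ * Estar / b₂) = 0; field_simp; ring,
        by show α₂ * Astar - b₃ * (α₂ * Astar / b₃) = 0; field_simp; ring,
        by show α₃ * F₁star - b₄ * (α₃ * F₁star / b₄) = 0; field_simp; ring⟩
      rw [hEstar]
      simp only [Astar, F₁star, F₂star, hEstar]
      field_simp
      ring
end
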